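/- If X ⊆ ℓ^∞ is nonempty and bounded and limsup_{n→∞} diam X_n = 0, then X is totally bounded (hence relatively compact) in ℓ^∞. -/
import Mathlib


/-- If `X` is a nonempty bounded subset of `ℓ^∞` (bounded real sequences with sup norm)
and `limsup_{n→∞} diam Xₙ = 0`, where `Xₙ = {xₙ : x ∈ X}`, then `X` is totally bounded
(hence relatively compact) in `ℓ^∞`. -/
theorem stmt7 (X : Set (lp (fun _ : ℕ => ℝ) ⊤)) (hne : X.Nonempty)
    (hb : Bornology.IsBounded X)
    (h : Filter.limsup
        (fun n => sSup {d : ℝ | ∃ x ∈ X, ∃ y ∈ X, d = |x n - y n|}) Filter.atTop = 0) :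
    TotallyBounded X := by
  classical
  obtain ⟨R, hR⟩ := hb.exists_norm_le
  have hR0 : 0 ≤ R := (norm_nonneg _).trans (hR _ hne.choose_spec)
  set f : ℕ → ℝ := fun n => sSup {d : ℝ | ∃ x ∈ X, ∃ y ∈ X, d = |x n - y n|} with hf
  have hub : ∀ n (x : lp (fun _ : ℕ => ℝ) ⊤), x ∈ X → ∀ y ∈ X, |x n - y n| ≤ 2 * R := by
    intro n x hx y hy
    have hx' : ‖x n‖ ≤ ‖x‖ := lp.norm_apply_le_norm (by norm_num) x n
    have hy' : ‖y n‖ ≤ ‖y‖ := lp.norm_apply_le_norm (by norm_num) y n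
    calc |x n - y n| ≤ |x n| + |y n| := abs_sub _ _
      _ ≤ R + R := add_le_add (hx'.trans (hR x hx)) (hy'.trans (hR y hy))
      _ = 2 * R := by ring
  have hbdd : ∀ n, BddAbove {d : ℝ | ∃ x ∈ X, ∃ y ∈ X, d = |x n - y n|} := by
    intro n
    exact ⟨2 * R, by rintro d ⟨x, hx, y, hy, rfl⟩; exact hub n x hx y hy⟩
  have hle : ∀ n (x : lp (fun _ : ℕ => ℝ) ⊤), x ∈ X → ∀ y ∈ X, |x n - y n| ≤ f n := by
    intro n x hx y hy
    exact le_csSup (hbdd n) ⟨x, hx, y, hy, rfl⟩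
  rw [Metric.totallyBounded_iff]
  intro ε hε
  -- find N with f n < ε/3 for n ≥ N
  have hfle : ∀ n, f n ≤ 2 * R := fun n =>
    Real.sSup_le (by rintro d ⟨x, hx, y, hy, rfl⟩; exact hub n x hx y hy) (by linarith)
  have hbdd' : Filter.IsBoundedUnder (· ≤ ·) Filter.atTop f :=
    Filter.isBoundedUnder_of ⟨2 * R, hfle⟩
  have hlimsup : Filter.limsup f Filter.atTop < ε / 3 := by
    rw [hf] at h ⊢; rw [h]; positivity
  obtain ⟨N, hN⟩ := (Filter.eventually_atTop).1
    (Filter.eventually_lt_of_limsup_lt hlimsup hbdd')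
  -- project to first N coordinates
  set proj : lp (fun _ : ℕ => ℝ) ⊤ → (Fin N → ℝ) := fun x i => x i with hproj
  have hY : TotallyBounded (proj '' X) := by
    refine (isCompact_closedBall (0 : Fin N → ℝ) R).totallyBounded.subset ?_
    rintro _ ⟨x, hx, rfl⟩
    rw [Metric.mem_closedBall, dist_zero_right]
    refine (pi_norm_le_iff_of_nonneg hR0).2 fun i => ?_
    exact (lp.norm_apply_le_norm (by norm_num) x i).trans (hR x hx)
  obtain ⟨t, htsub, htfin, htcov⟩ := Metric.finite_approx_of_totallyBounded hY (ε / 3) (by positivity)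
  -- choose preimages
  have hchoice : ∀ y ∈ t, ∃ x ∈ X, proj x = y := fun y hy => htsub hy
  set g : (Fin N → ℝ) → lp (fun _ : ℕ => ℝ) ⊤ := fun y =>
    if hy : ∃ x ∈ X, proj x = y then hy.choose else hne.choose with hg
  have hgX : ∀ y ∈ t, g y ∈ X ∧ proj (g y) = y := by
    intro y hy
    have := hchoice y hy
    simp only [hg, dif_pos this]
    exact ⟨this.choose_spec.1, this.choose_spec.2⟩
  refine ⟨g '' t, htfin.image g, fun x hx => ?_⟩
  obtain ⟨y, hyt, hyd⟩ := Set.mem_iUnion₂.1 (htcov ⟨x, hx, rfl⟩)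
  obtain ⟨hgX1, hgX2⟩ := hgX y hyt
  refine Set.mem_iUnion₂.2 ⟨g y, Set.mem_image_of_mem g hyt, ?_⟩
  rw [Metric.mem_ball, dist_eq_norm]
  have key : ∀ n : ℕ, ‖(x - g y) n‖ ≤ 2 * (ε / 3) := by
    intro n
    have hcoe : (x - g y) n = x n - g y n := by
      simp [lp.coeFn_sub, Pi.sub_apply]
    rw [hcoe, Real.norm_eq_abs]
    rcases lt_or_ge n N with hn | hn
    · have : dist (proj x) y < ε / 3 := Metric.mem_ball.1 hyd
      have hi := (dist_pi_lt_iff (by positivity)).1 this ⟨n, hn⟩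
      have : |x n - y ⟨n, hn⟩| < ε / 3 := by
        simpa [Real.dist_eq, hproj] using hi
      have hyn : y ⟨n, hn⟩ = g y n := (congrFun hgX2 ⟨n, hn⟩).symm
      rw [hyn] at this
      linarith
    · have := hle n x hx (g y) hgX1
      have hfn := hN n hn
      linarith
  calc ‖x - g y‖ ≤ 2 * (ε / 3) := lp.norm_le_of_forall_le (by positivity) key
    _ < ε := by linarith
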